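/- In the reduction graph G built from a Set Cover instance, the set L of all degree-1 vertices (namely L = Y' ∪ Z') monitors all edges having both endpoints in Y ∪ Y' ∪ Z ∪ Z'. -/

import Mathlib

/-- Edge `e` is monitored by the pair `x, y` if `x ≠ y` and `e` lies on
every shortest path between `x` and `y`. -/
def Monitors {V : Type*} (G : SimpleGraph V) (x y : V) (e : Sym2 V) : Prop :=
  x ≠ y ∧ ∀ p : G.Walk x y, p.length = G.dist x y → e ∈ p.edges

/-- `M` is a monitoring edge-geodetic set of `G`. -/
def IsMEGSet {V : Type*} (G : SimpleGraph V) (M : Set V) : Prop :=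
  ∀ e ∈ G.edgeSet, ∃ x ∈ M, ∃ y ∈ M, Monitors G x y e

/-- Vertices of the reduction graph built from a Set Cover instance with
`η` items, `h` sets and `k` copies of the incidence graph:
`item i ℓ` is the copy `x_{i,ℓ}`, `setv j ℓ` is the copy `S_{j,ℓ}`,
`y i`/`yp i` are `y_i`/`y'_i`, and `z j`/`zp j` are `z_j`/`z'_j`. -/
inductive RV (η h k : ℕ) where
  | item : Fin η → Fin k → RV η h k
  | setv : Fin h → Fin k → RV η h k
  | y : Fin η → RV η h k
  | yp : Fin η → RV η h k
  | z : Fin h → RV η h k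
  | zp : Fin h → RV η h k

/-- The (asymmetric) base relation describing the edges of the reduction graph. -/
def redRel {η h k : ℕ} (S : Fin h → Set (Fin η)) : RV η h k → RV η h k → Prop
  | .item i ℓ, .setv j m => ℓ = m ∧ i ∈ S j
  | .item i _, .y i' => i = i'
  | .y _, .y _ => True
  | .y i, .yp i' => i = i'
  | .setv j _, .z j' => j = j'
  | .z j, .zp j' => j = j'
  | _, _ => False

/-- The reduction graph `G` built from the Set Cover instance `S`. -/
def redGraph {η h k : ℕ} (S : Fin h → Set (Fin η)) : SimpleGraph (RV η h k) :=
  SimpleGraph.fromRel (redRel S)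

/-- `L = Y' ∪ Z'`, the set of degree-1 vertices of the reduction graph. -/
def Lset (η h k : ℕ) : Set (RV η h k) :=
  {v | ∃ i, v = .yp i} ∪ {v | ∃ j, v = .zp j}

/-- `Y ∪ Y' ∪ Z ∪ Z'`: the vertices of the reduction graph that are not
copies of items or sets. -/
def YZset (η h k : ℕ) : Set (RV η h k) := fun v =>
  match v with
  | .item _ _ => False
  | .setv _ _ => False
  | _ => True

section Helpers

variable {η h k : ℕ} {S : Fin h → Set (Fin η)}

lemma yp_nbr {v : RV η h k} {i : Fin η} (hv : (redGraph S).Adj (RV.yp i) v) :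
    v = RV.y i := by
  rw [redGraph, SimpleGraph.fromRel_adj] at hv
  obtain ⟨-, h1 | h1⟩ := hv
  · cases v <;> exact h1.elim
  · cases v <;> first
      | exact h1.elim
      | (simp [redRel] at h1; simp [h1])

lemma zp_nbr {v : RV η h k} {j : Fin h} (hv : (redGraph S).Adj (RV.zp j) v) :
    v = RV.z j := by
  rw [redGraph, SimpleGraph.fromRel_adj] at hv
  obtain ⟨-, h1 | h1⟩ := hv
  · cases v <;> exact h1.elim
  · cases v <;> first
      | exact h1.elim
      | (simp [redRel] at h1; simp [h1])

lemma walk_yp_edge {x : RV η h k} {i : Fin η} (hx : RV.yp i ≠ x)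
    (p : (redGraph S).Walk (RV.yp i) x) : s(RV.yp i, RV.y i) ∈ p.edges := by
  cases p with
  | nil => exact absurd rfl hx
  | cons h1 q => have hc := yp_nbr h1; subst hc; simp

lemma walk_zp_edge {x : RV η h k} {j : Fin h} (hx : RV.zp j ≠ x)
    (p : (redGraph S).Walk (RV.zp j) x) : s(RV.zp j, RV.z j) ∈ p.edges := by
  cases p with
  | nil => exact absurd rfl hx
  | cons h1 q => have hc := zp_nbr h1; subst hc; simp

lemma adj_yp_y {i : Fin η} :
    (redGraph S).Adj (RV.yp i : RV η h k) (RV.y i) := by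
  rw [redGraph, SimpleGraph.fromRel_adj]
  exact ⟨by simp, Or.inr (by simp [redRel])⟩

lemma adj_y_y {i i' : Fin η} (hii : i ≠ i') :
    (redGraph S).Adj (RV.y i : RV η h k) (RV.y i') := by
  rw [redGraph, SimpleGraph.fromRel_adj]
  exact ⟨by simp [hii], Or.inl trivial⟩

lemma walk3 {a b : RV η h k} {i i' : Fin η} (p : (redGraph S).Walk a b)
    (ha : a = RV.yp i) (hb : b = RV.yp i') (hii : i ≠ i') (hl : p.length ≤ 3) :
    s(RV.y i, RV.y i') ∈ p.edges := by
  cases p with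
  | nil =>
    rw [ha] at hb; exact absurd (by injection hb) hii
  | cons h1 q =>
    subst ha
    have hc := yp_nbr h1; subst hc
    cases q with
    | nil => cases hb
    | cons h2 r =>
      cases r with
      | nil =>
        subst hb
        have h4 := yp_nbr h2.symm
        exact absurd (by injection h4) hii
      | cons h3 t =>
        simp only [SimpleGraph.Walk.length_cons] at hl
        have ht0 : t.length = 0 := by omega
        have hbe := SimpleGraph.Walk.eq_of_length_eq_zero ht0
        subst hbe; subst hb
        have hd := yp_nbr h3.symm; subst hd
        simp

end Helpers

/-- In the reduction graph, `L` monitors all edges having both endpoints in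
`Y ∪ Y' ∪ Z ∪ Z'`. -/
theorem L_monitors_outside_edges {η h k : ℕ}
    (S : Fin h → Set (Fin η)) (hS : Function.Injective S)
    (hh : 2 ≤ h) (hk : 2 ≤ k)
    (hsets : ∀ j, (S j).Nontrivial)
    (hitems : ∀ i : Fin η, ∃ j j' : Fin h, j ≠ j' ∧ i ∈ S j ∧ i ∈ S j') :
    ∀ u v : RV η h k, (redGraph S).Adj u v → u ∈ YZset η h k → v ∈ YZset η h k →
      ∃ a ∈ Lset η h k, ∃ b ∈ Lset η h k, Monitors (redGraph S) a b s(u, v) := by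
  intro u v hadj hu hv
  have hj0 : (0 : ℕ) < h := by omega
  have hadj' := hadj
  rw [redGraph, SimpleGraph.fromRel_adj] at hadj'
  obtain ⟨hne, hrel⟩ := hadj'
  cases u with
  | item i l => exact hu.elim
  | setv j l => exact hu.elim
  | y i =>
    cases v with
    | item i' l => exact hv.elim
    | setv j' l => exact hv.elim
    | y i' =>
      have hii : i ≠ i' := fun hc => hne (by rw [hc])
      refine ⟨RV.yp i, Or.inl ⟨i, rfl⟩, RV.yp i', Or.inl ⟨i', rfl⟩, ?_, ?_⟩
      · simp [hii]
      · intro p hp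
        have hd := SimpleGraph.dist_le
          (SimpleGraph.Walk.cons (adj_yp_y (S := S) (k := k) (i := i))
            (SimpleGraph.Walk.cons (adj_y_y (S := S) (k := k) hii)
              (SimpleGraph.Walk.cons (adj_yp_y (S := S) (k := k) (i := i')).symm
                SimpleGraph.Walk.nil)))
        simp only [SimpleGraph.Walk.length_cons, SimpleGraph.Walk.length_nil] at hd
        exact walk3 p rfl rfl hii (by omega)
    | yp i' =>
      have hii : i = i' := by
        rcases hrel with h1 | h1
        · simpa [redRel] using h1
        · exact h1.elim
      subst hii
      refine ⟨RV.yp i, Or.inl ⟨i, rfl⟩, RV.zp ⟨0, hj0⟩, Or.inr ⟨_, rfl⟩, by simp, ?_⟩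
      intro p _
      have := walk_yp_edge (by simp) p
      rwa [Sym2.eq_swap] at this
    | z j' => rcases hrel with h1 | h1 <;> exact h1.elim
    | zp j' => rcases hrel with h1 | h1 <;> exact h1.elim
  | yp i =>
    cases v with
    | item i' l => exact hv.elim
    | setv j' l => exact hv.elim
    | y i' =>
      have hii : i = i' := by
        rcases hrel with h1 | h1
        · exact h1.elim
        · exact (by simpa [redRel] using h1 : i' = i).symm
      subst hii
      refine ⟨RV.yp i, Or.inl ⟨i, rfl⟩, RV.zp ⟨0, hj0⟩, Or.inr ⟨_, rfl⟩, by simp, ?_⟩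
      intro p _
      exact walk_yp_edge (by simp) p
    | yp i' => rcases hrel with h1 | h1 <;> exact h1.elim
    | z j' => rcases hrel with h1 | h1 <;> exact h1.elim
    | zp j' => rcases hrel with h1 | h1 <;> exact h1.elim
  | z j =>
    cases v with
    | item i' l => exact hv.elim
    | setv j' l => exact hv.elim
    | y i' => rcases hrel with h1 | h1 <;> exact h1.elim
    | yp i' => rcases hrel with h1 | h1 <;> exact h1.elim
    | z j' => rcases hrel with h1 | h1 <;> exact h1.elim
    | zp j' =>
      have hjj : j = j' := by
        rcases hrel with h1 | h1
        · simpa [redRel] using h1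
        · exact h1.elim
      subst hjj
      obtain ⟨j', hj'⟩ := Fintype.exists_ne_of_one_lt_card
        (by simp; omega : 1 < Fintype.card (Fin h)) j
      refine ⟨RV.zp j, Or.inr ⟨j, rfl⟩, RV.zp j', Or.inr ⟨j', rfl⟩, by simp [Ne.symm hj'], ?_⟩
      intro p _
      have := walk_zp_edge (by simp [Ne.symm hj']) p
      rwa [Sym2.eq_swap] at this
  | zp j =>
    cases v with
    | item i' l => exact hv.elim
    | setv j' l => exact hv.elim
    | y i' => rcases hrel with h1 | h1 <;> exact h1.elim
    | yp i' => rcases hrel with h1 | h1 <;> exact h1.elim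
    | z j' =>
      have hjj : j = j' := by
        rcases hrel with h1 | h1
        · exact h1.elim
        · exact (by simpa [redRel] using h1 : j' = j).symm
      subst hjj
      obtain ⟨j', hj'⟩ := Fintype.exists_ne_of_one_lt_card
        (by simp; omega : 1 < Fintype.card (Fin h)) j
      refine ⟨RV.zp j, Or.inr ⟨j, rfl⟩, RV.zp j', Or.inr ⟨j', rfl⟩, by simp [Ne.symm hj'], ?_⟩
      intro p _
      exact walk_zp_edge (by simp [Ne.symm hj']) p
    | zp j' => rcases hrel with h1 | h1 <;> exact h1.elim
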